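/- Let p be a quantum model on a contextuality scenario H = (V,E): there exist a (finite-dimensional) Hilbert space ℋ, a density operator ρ, and projections P_v for v ∈ V with ∑_{v∈e} P_v = 1 for all e ∈ E and p(v) = tr(ρ P_v). Then the matrix M indexed by {1} ∪ V defined by M_{uv} = tr(ρ P_u P_v) — more precisely, M_{uv} = tr(√ρ P_u P_v √ρ) to ensure positive semidefiniteness — together with M_{1v} = p(v) and M_{11} = 1, is a Q₁ certificate for p; hence every quantum model is in Q₁. -/

import Mathlib

open scoped ComplexOrder
open scoped MatrixOrder

open Matrix in
/-- Projections summing to the identity are mutually orthogonal. -/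
lemma proj_orthogonal {V : Type*} [DecidableEq V] {n : ℕ} (e : Finset V)
    (P : V → Matrix (Fin n) (Fin n) ℂ)
    (hherm : ∀ v, (P v).IsHermitian)
    (hproj : ∀ v, P v * P v = P v)
    (hsum : ∑ v ∈ e, P v = 1)
    {u v : V} (hu : u ∈ e) (hv : v ∈ e) (huv : u ≠ v) :
    P u * P v = 0 := by
  -- ∑_{w ∈ e.erase v} (P w * P v)ᴴ * (P w * P v) = 0
  have hterm : ∀ w, (P w * P v)ᴴ * (P w * P v) = P v * P w * P v := by
    intro w
    rw [conjTranspose_mul, (hherm w).eq, (hherm v).eq,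
      show P v * P w * (P w * P v) = P v * (P w * P w) * P v by noncomm_ring, hproj w]
  have hzero : ∑ w ∈ e.erase v, (P w * P v)ᴴ * (P w * P v) = 0 := by
    have h1 : ∑ w ∈ e, P v * P w * P v = P v := by
      rw [← Finset.sum_mul, ← Finset.mul_sum, hsum, mul_one, hproj]
    have h2 : ∑ w ∈ e, P v * P w * P v
        = (∑ w ∈ e.erase v, P v * P w * P v) + P v * P v * P v := by
      rw [Finset.sum_erase_add e _ hv]
    rw [h1, hproj, hproj] at h2
    simp only [hterm]
    linear_combination (norm := abel) h2.symm
  -- conclude each summand vanishes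
  have hPSD : (P u * P v)ᴴ * (P u * P v) = 0 := by
    have hue : u ∈ e.erase v := Finset.mem_erase.2 ⟨huv, hu⟩
    -- quadratic form of the sum is zero, each is nonneg
    ext i j
    have hq : ∀ x : Fin n → ℂ,
        star x ⬝ᵥ ((P u * P v)ᴴ * (P u * P v)) *ᵥ x = 0 := by
      intro x
      have hlin : ∑ w ∈ e.erase v, star x ⬝ᵥ ((P w * P v)ᴴ * (P w * P v)) *ᵥ x
          = star x ⬝ᵥ (∑ w ∈ e.erase v, (P w * P v)ᴴ * (P w * P v)) *ᵥ x := by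
        simp only [dotProduct, Matrix.mulVec, Matrix.sum_apply, Finset.sum_mul,
          Finset.mul_sum]
        rw [Finset.sum_comm]
        exact Finset.sum_congr rfl fun i _ => Finset.sum_comm
      have this2 : ∑ w ∈ e.erase v, star x ⬝ᵥ ((P w * P v)ᴴ * (P w * P v)) *ᵥ x = 0 := by
        rw [hlin, hzero]; simp
      have hnn : ∀ w ∈ e.erase v,
          0 ≤ star x ⬝ᵥ ((P w * P v)ᴴ * (P w * P v)) *ᵥ x := fun w _ =>
        (posSemidef_conjTranspose_mul_self (P w * P v)).dotProduct_mulVec_nonneg x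
      exact (Finset.sum_eq_zero_iff_of_nonneg hnn).1 this2 u hue
    have hmv : ∀ x : Fin n → ℂ, ((P u * P v)ᴴ * (P u * P v)) *ᵥ x = 0 := fun x =>
      ((posSemidef_conjTranspose_mul_self (P u * P v)).dotProduct_mulVec_zero_iff x).1 (hq x)
    have := congrFun (hmv (Pi.single j 1)) i
    simpa [mulVec_single] using this
  exact conjTranspose_mul_self_eq_zero.mp hPSD

/-- Q₁ certificate for a probabilistic model `p` on the scenario `(V, E)`. -/
def Q1Cert {V : Type*} [Fintype V] [DecidableEq V] (E : Finset (Finset V))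
    (p : V → ℝ) (M : Matrix (Option V) (Option V) ℝ) : Prop :=
  M.PosSemidef ∧
  M none none = 1 ∧
  (∀ v : V, M none (some v) = p v) ∧
  (∀ v : V, M (some v) (some v) = p v) ∧
  (∀ e ∈ E, ∀ u ∈ e, ∀ v ∈ e, u ≠ v → M (some u) (some v) = 0) ∧
  (∀ e ∈ E, ∀ v : V, ∑ u ∈ e, M (some u) (some v) = p v)

open Matrix in
/-- Every quantum model (projections `P_v` summing to the identity over each edge,
probabilities `p(v) = tr(ρ P_v)` for a density matrix `ρ`) admits a Q₁ certificate,
namely `Mᵤᵥ = Re tr(√ρ P_u P_v √ρ)`, `M₁ᵥ = p(v)`, `M₁₁ = 1`.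
Hence every quantum model is in Q₁. -/
theorem quantum_model_mem_Q1 {V : Type*} [Fintype V] [DecidableEq V]
    (E : Finset (Finset V)) (p : V → ℝ) (n : ℕ)
    (ρ : Matrix (Fin n) (Fin n) ℂ) (hρ : ρ.PosSemidef) (hρtr : ρ.trace = 1)
    (P : V → Matrix (Fin n) (Fin n) ℂ)
    (hherm : ∀ v, (P v).IsHermitian)
    (hproj : ∀ v, P v * P v = P v)
    (hsum : ∀ e ∈ E, ∑ v ∈ e, P v = 1)
    (hp : ∀ v, (ρ * P v).trace = (p v : ℂ)) :
    Q1Cert E p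
      (Matrix.of fun i j : Option V =>
        match i, j with
        | none, none => 1
        | none, some v => p v
        | some u, none => p u
        | some u, some v => ((CFC.sqrt ρ * P u * P v * CFC.sqrt ρ).trace).re) := by
  set s : Matrix (Fin n) (Fin n) ℂ := CFC.sqrt ρ with hs
  have hsH : sᴴ = s := (Matrix.nonneg_iff_posSemidef.mp (CFC.sqrt_nonneg ρ)).isHermitian
  have hss : s * s = ρ := CFC.sqrt_mul_sqrt_self ρ (Matrix.nonneg_iff_posSemidef.mpr hρ)
  have htr : ∀ B : Matrix (Fin n) (Fin n) ℂ, (s * B * s).trace = (ρ * B).trace := by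
    intro B
    rw [Matrix.trace_mul_cycle, hss]
  set M : Matrix (Option V) (Option V) ℝ :=
      (Matrix.of fun i j : Option V =>
        match i, j with
        | none, none => 1
        | none, some v => p v
        | some u, none => p u
        | some u, some v => ((s * P u * P v * s).trace).re) with hM
  -- the Gram matrix
  set A : Option V → Matrix (Fin n) (Fin n) ℂ :=
    fun i => match i with | none => s | some v => P v * s with hA
  set T : Matrix (Fin n × Fin n) (Option V) ℂ := Matrix.of fun k i => A i k.2 k.1 with hT
  have hG : (Tᴴ * T).PosSemidef := Matrix.posSemidef_conjTranspose_mul_self T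
  have hGtr : ∀ i j, (Tᴴ * T) i j = ((A i)ᴴ * A j).trace := by
    intro i j
    simp only [Matrix.mul_apply, Matrix.conjTranspose_apply, Matrix.trace, Matrix.diag,
      Matrix.of_apply, hT, Fintype.sum_prod_type]
  -- entries of M are real parts of the Gram matrix
  have hents : ∀ i j, M i j = ((Tᴴ * T) i j).re := by
    intro i j
    match i, j with
    | none, none =>
        rw [hGtr]
        show M none none = ((sᴴ * s).trace).re
        rw [hsH, hss, hρtr]
        simp [hM]
    | none, some v =>
        rw [hGtr]
        show M none (some v) = ((sᴴ * (P v * s)).trace).re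
        rw [hsH, ← mul_assoc, htr, hp v]
        simp [hM]
    | some u, none =>
        rw [hGtr]
        show M (some u) none = (((P u * s)ᴴ * s).trace).re
        rw [Matrix.conjTranspose_mul, hsH, (hherm u).eq, htr, hp u]
        simp [hM]
    | some u, some v =>
        rw [hGtr]
        show M (some u) (some v) = (((P u * s)ᴴ * (P v * s)).trace).re
        rw [Matrix.conjTranspose_mul, hsH, (hherm u).eq,
          show s * P u * (P v * s) = s * P u * P v * s by noncomm_ring]
        simp [hM]
  refine ⟨Matrix.PosSemidef.of_dotProduct_mulVec_nonneg ?_ ?_, by simp [hM], fun v => by simp [hM], ?_, ?_, ?_⟩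
  · -- hermitian
    ext i j
    rw [Matrix.conjTranspose_apply]
    rw [show star (M j i) = M j i from rfl, hents, hents]
    rw [show (Tᴴ * T) j i = star ((Tᴴ * T) i j) from by
      conv_lhs => rw [← hG.isHermitian.eq]
      rfl]
    simp [Complex.conj_re]
  · -- nonneg quadratic form
    intro x
    set xc : Option V → ℂ := fun i => ((x i : ℝ) : ℂ) with hxc
    have h0 := hG.dotProduct_mulVec_nonneg xc
    have hre : (0 : ℝ) ≤ (star xc ⬝ᵥ (Tᴴ * T) *ᵥ xc).re := (Complex.le_def.mp h0).1
    have key : star x ⬝ᵥ M *ᵥ x = (star xc ⬝ᵥ (Tᴴ * T) *ᵥ xc).re := by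
      simp only [dotProduct, Matrix.mulVec, Pi.star_apply, Finset.mul_sum,
        Complex.re_sum, hxc, star_trivial, RCLike.star_def, Complex.conj_ofReal]
      refine Finset.sum_congr rfl fun i _ => Finset.sum_congr rfl fun j _ => ?_
      rw [Complex.re_ofReal_mul, mul_comm ((Tᴴ * T) i j), Complex.re_ofReal_mul, hents]
      ring
    rw [key]
    exact hre
  · -- diagonal
    intro v
    have h1 : (s * P v * P v * s).trace = ((p v : ℝ) : ℂ) := by
      rw [show s * P v * P v * s = s * (P v * P v) * s by noncomm_ring, hproj v, htr, hp v]
    simp [hM, h1]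
  · -- orthogonality entries
    intro e he u hu v hv huv
    have hPuv : P u * P v = 0 := proj_orthogonal e P hherm hproj (hsum e he) hu hv huv
    have h0 : s * P u * P v * s = 0 := by
      rw [mul_assoc s (P u) (P v), hPuv, mul_zero, zero_mul]
    simp [hM, h0]
  · -- edge sums
    intro e he v
    have : ∑ u ∈ e, ((s * P u * P v * s).trace).re
        = ((s * (∑ u ∈ e, P u) * P v * s).trace).re := by
      rw [Finset.mul_sum, Finset.sum_mul, Finset.sum_mul, Matrix.trace_sum, Complex.re_sum]
    simp only [hM, Matrix.of_apply]
    rw [this, hsum e he, mul_one, htr, hp v]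
    simp
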